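/- The number of distinct isomorphism classes (structures) of 1D random geometric graphs on n nodes is at most the n-th Catalan number, and hence the structural entropy satisfies H(S_{n,r}) ≤ 2n − (3/2)·log₂ n − (1/2)·log₂ π, for any n, any connection range r > 0, and any distribution of node locations. -/

import Mathlib

open MeasureTheory

section core
open Real Nat Filter List DyckStep


lemma sqrt_pi_le_stirlingSeq {n : ℕ} (hn : 1 ≤ n) : Real.sqrt π ≤ Stirling.stirlingSeq n := by
  obtain ⟨m, rfl⟩ := Nat.exists_eq_add_of_le hn
  have ha : Antitone (Stirling.stirlingSeq ∘ Nat.succ) := Stirling.stirlingSeq'_antitone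
  have ht : Filter.Tendsto (Stirling.stirlingSeq ∘ Nat.succ) atTop (nhds (Real.sqrt π)) :=
    Stirling.tendsto_stirlingSeq_sqrt_pi.comp (tendsto_add_atTop_nat 1)
  have := ha.le_of_tendsto ht m
  simpa [Nat.succ_eq_add_one, Nat.add_comm] using this

lemma stirling_anti {a b : ℕ} (ha : 1 ≤ a) (hab : a ≤ b) :
    Stirling.stirlingSeq b ≤ Stirling.stirlingSeq a := by
  obtain ⟨a', rfl⟩ := Nat.exists_eq_add_of_le ha
  obtain ⟨c, rfl⟩ := Nat.exists_eq_add_of_le hab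
  have h := Stirling.stirlingSeq'_antitone (Nat.le_add_right a' c)
  simp only [Function.comp] at h
  convert h using 2
  · rfl
  all_goals omega

lemma centralBinom_key {n : ℕ} (hn : 1 ≤ n) :
    (Nat.centralBinom n : ℝ) * (Stirling.stirlingSeq n)^2 * Real.sqrt n
      = Stirling.stirlingSeq (2 * n) * 4 ^ n := by
  have hn0 : (0:ℝ) < n := by exact_mod_cast hn
  set q : ℝ := ((n:ℝ) / Real.exp 1) ^ n with hqdef
  have hq : (0:ℝ) < q := by positivity
  have hu : (0:ℝ) < Real.sqrt n := Real.sqrt_pos.2 hn0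
  set st := Stirling.stirlingSeq n
  set st2 := Stirling.stirlingSeq (2*n)
  have hfact : (Nat.centralBinom n : ℝ) * ((n ! : ℝ) * (n ! : ℝ)) = ((2 * n)! : ℝ) := by
    have h2 := Nat.choose_mul_factorial_mul_factorial (show n ≤ 2*n by omega)
    rw [mul_assoc] at h2
    rw [Nat.centralBinom]
    exact_mod_cast congrArg (Nat.cast : ℕ → ℝ)
      (by simpa [show 2*n-n = n by omega] using h2)
  have e1 : (n ! : ℝ) = st * (Real.sqrt (2*n) * q) := by
    rw [show st = Stirling.stirlingSeq n from rfl, Stirling.stirlingSeq]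
    push_cast
    rw [div_mul_cancel₀]
    positivity
  have e2 : ((2*n) ! : ℝ) = st2 * (Real.sqrt (2*(2*n)) * (((2*n:ℕ):ℝ) / Real.exp 1) ^ (2*n)) := by
    rw [show st2 = Stirling.stirlingSeq (2*n) from rfl, Stirling.stirlingSeq]
    push_cast
    rw [div_mul_cancel₀]
    positivity
  have hs1 : Real.sqrt (2*(n:ℝ)) ^ 2 = 2*n := Real.sq_sqrt (by positivity)
  have hs2 : Real.sqrt (2*(2*(n:ℝ))) = 2 * Real.sqrt n := by
    rw [show 2*(2*(n:ℝ)) = 4 * n by ring, Real.sqrt_mul (by norm_num),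
      show Real.sqrt 4 = 2 by rw [show (4:ℝ) = 2^2 by norm_num, Real.sqrt_sq (by norm_num)]]
  have hpow : (((2*n:ℕ):ℝ) / Real.exp 1) ^ (2*n) = 4^n * q^2 := by
    push_cast
    rw [show (2*(n:ℝ)) / Real.exp 1 = 2 * ((n:ℝ)/Real.exp 1) by ring, mul_pow]
    congr 1
    · rw [pow_mul]; norm_num
    · rw [hqdef, ← pow_mul, Nat.mul_comm]
  have heq : (Nat.centralBinom n : ℝ) * (st * (Real.sqrt (2*(n:ℝ)) * q))^2
      = st2 * ((2 * Real.sqrt n) * (4^n * q^2)) := by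
    calc (Nat.centralBinom n : ℝ) * (st * (Real.sqrt (2*(n:ℝ)) * q))^2
        = (Nat.centralBinom n : ℝ) * ((st * (Real.sqrt (2*(n:ℝ)) * q)) * (st * (Real.sqrt (2*(n:ℝ)) * q))) := by ring
      _ = (Nat.centralBinom n : ℝ) * ((n ! : ℝ) * (n ! : ℝ)) := by rw [← e1]
      _ = ((2*n)! : ℝ) := hfact
      _ = st2 * ((2 * Real.sqrt n) * (4^n * q^2)) := by rw [e2, hs2, hpow]
  have hss : Real.sqrt (n:ℝ) * Real.sqrt n = n := Real.mul_self_sqrt hn0.le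
  have heq2 : ((Nat.centralBinom n : ℝ) * st^2 * Real.sqrt n * Real.sqrt n) * (2 * q^2)
      = (st2 * 4^n * Real.sqrt n) * (2 * q^2) := by
    linear_combination heq + ((Nat.centralBinom n : ℝ)*st^2*q^2*2)*hss
      - ((Nat.centralBinom n : ℝ)*st^2*q^2)*hs1
  have h3 := mul_right_cancel₀ (show (2*q^2:ℝ) ≠ 0 by positivity) heq2
  exact mul_right_cancel₀ hu.ne' (by linarith)

lemma catalan_real_bound {n : ℕ} (hn : 1 ≤ n) :
    (catalan n : ℝ) * (Real.sqrt π * ((n:ℝ) * Real.sqrt n)) ≤ 4 ^ n := by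
  have hn0 : (0:ℝ) < n := by exact_mod_cast hn
  have hu : (0:ℝ) < Real.sqrt n := Real.sqrt_pos.2 hn0
  have hst : (0:ℝ) < Stirling.stirlingSeq n := by
    obtain ⟨m, rfl⟩ := Nat.exists_eq_add_of_le hn
    simpa [Nat.add_comm] using Stirling.stirlingSeq'_pos m
  have hpi : Real.sqrt π ≤ Stirling.stirlingSeq n := sqrt_pi_le_stirlingSeq hn
  have hanti : Stirling.stirlingSeq (2*n) ≤ Stirling.stirlingSeq n := stirling_anti hn (by omega)
  have hkey := centralBinom_key hn
  have hcb : ((n:ℝ)+1) * (catalan n : ℝ) = (Nat.centralBinom n : ℝ) := by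
    exact_mod_cast congrArg (Nat.cast : ℕ → ℝ) (succ_mul_catalan_eq_centralBinom n)
  have hC0 : (0:ℝ) ≤ (Nat.centralBinom n : ℝ) := by positivity
  have hcat0 : (0:ℝ) ≤ (catalan n : ℝ) := by positivity
  have h1 : (Nat.centralBinom n : ℝ) * (Real.sqrt π * Real.sqrt n) * Stirling.stirlingSeq n
      ≤ Stirling.stirlingSeq n * 4^n := by
    calc (Nat.centralBinom n : ℝ) * (Real.sqrt π * Real.sqrt n) * Stirling.stirlingSeq n
        ≤ (Nat.centralBinom n : ℝ) * (Stirling.stirlingSeq n)^2 * Real.sqrt n := by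
          nlinarith [mul_nonneg (mul_nonneg hC0 hu.le) (mul_nonneg hst.le (sub_nonneg.2 hpi))]
      _ = Stirling.stirlingSeq (2*n) * 4^n := hkey
      _ ≤ Stirling.stirlingSeq n * 4^n :=
          mul_le_mul_of_nonneg_right hanti (by positivity)
  have h2 : (Nat.centralBinom n : ℝ) * (Real.sqrt π * Real.sqrt n) ≤ 4^n :=
    le_of_mul_le_mul_right (by linarith) hst
  calc (catalan n : ℝ) * (Real.sqrt π * ((n:ℝ) * Real.sqrt n))
      ≤ (catalan n : ℝ) * (Real.sqrt π * (((n:ℝ)+1) * Real.sqrt n)) := by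
        have hle : (n:ℝ) ≤ (n:ℝ)+1 := by linarith
        gcongr
    _ = (Nat.centralBinom n : ℝ) * (Real.sqrt π * Real.sqrt n) := by rw [← hcb]; ring
    _ ≤ 4^n := h2


/-- Dyck-path word from the counting function `G`: `m` blocks starting at index `k`. -/
def dyckW (G : ℕ → ℕ) : ℕ → ℕ → List DyckStep
  | 0, _ => []
  | (m+1), k => U :: (List.replicate (G (k+1) - G k) D ++ dyckW G m (k+1))

def decodeSteps : List DyckStep → ℕ → List ℕ
  | [], _ => []
  | (U :: w), d => d :: decodeSteps w d
  | (D :: w), d => decodeSteps w (d+1)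

lemma dyckW_count_U (G : ℕ → ℕ) : ∀ m k, (dyckW G m k).count U = m := by
  intro m
  induction m with
  | zero => intro k; rfl
  | succ m ih =>
    intro k
    simp [dyckW, List.count_cons, List.count_append, List.count_replicate, ih]

lemma dyckW_count_D (G : ℕ → ℕ) (hmono : Monotone G) :
    ∀ m k, (dyckW G m k).count D = G (m + k) - G k := by
  intro m
  induction m with
  | zero => intro k; simp [dyckW]
  | succ m ih =>
    intro k
    have h1 : G k ≤ G (k+1) := hmono (by omega)
    have h2 : G (k+1) ≤ G (m + (k+1)) := hmono (by omega)
    simp only [dyckW, List.count_cons, List.count_append, List.count_replicate, ih]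
    have : m + (k+1) = m + 1 + k := by omega
    rw [this] at h2 ⊢
    simp only [beq_iff_eq, reduceCtorEq, if_false, if_pos rfl, if_true]
    omega

lemma dyckW_prefix (G : ℕ → ℕ) (hmono : Monotone G) :
    ∀ m k c, (∀ j, j ≤ m → G (k + j) ≤ G k + c + j) →
    ∀ i, ((dyckW G m k).take i).count D ≤ c + ((dyckW G m k).take i).count U := by
  intro m
  induction m with
  | zero => intro k c _ i; simp [dyckW]
  | succ m ih =>
    intro k c H i
    have hGk : G k ≤ G (k+1) := hmono (by omega)
    have hac : G (k+1) - G k ≤ c + 1 := by have := H 1 (by omega); omega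
    match i with
    | 0 => simp
    | (i+1) =>
      simp only [dyckW, List.take_succ_cons, List.count_cons]
      rw [List.take_append, List.take_replicate, List.length_replicate]
      simp only [List.count_append, List.count_replicate, beq_iff_eq, reduceCtorEq,
        if_false, if_pos rfl, if_true]
      have hIH := ih (k+1) (c + 1 - (G (k+1) - G k)) ?_ (i - (G (k+1) - G k))
      · have hmin : min i (G (k+1) - G k) ≤ G (k+1) - G k := min_le_right _ _
        omega
      · intro j hj
        have h1 : G (k + (j+1)) ≤ G k + c + (j+1) := H (j+1) (by omega)
        have : k + 1 + j = k + (j + 1) := by omega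
        rw [this]
        omega

lemma decodeSteps_replicate (w : List DyckStep) :
    ∀ a d, decodeSteps (List.replicate a D ++ w) d = decodeSteps w (d + a) := by
  intro a
  induction a with
  | zero => intro d; simp [decodeSteps]
  | succ a ih =>
    intro d
    rw [List.replicate_succ, List.cons_append]
    show decodeSteps _ (d+1) = _
    rw [ih]
    congr 1
    omega

lemma dyckW_decode (G : ℕ → ℕ) (hmono : Monotone G) :
    ∀ m k d, decodeSteps (dyckW G m k) d = List.ofFn (fun i : Fin m => d + (G (k + i) - G k)) := by
  intro m
  induction m with
  | zero => intro k d; simp [dyckW, decodeSteps]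
  | succ m ih =>
    intro k d
    show d :: decodeSteps (List.replicate (G (k+1) - G k) D ++ dyckW G m (k+1)) d = _
    rw [decodeSteps_replicate, ih]
    rw [List.ofFn_succ]
    congr 1
    · simp
    · refine congrArg _ (funext fun i => ?_)
      have h1 : G k ≤ G (k+1) := hmono (by omega)
      have h2 : G (k+1) ≤ G (k + 1 + i.val) := hmono (by omega)
      simp only [Fin.val_succ]
      have hkk : k + (i.val + 1) = k + 1 + i.val := by omega
      rw [hkk]
      omega


lemma mem_iff_lt_card {n : ℕ} (S : Finset (Fin n))
    (hdc : ∀ ⦃k k' : Fin n⦄, k' ≤ k → k ∈ S → k' ∈ S) (k : Fin n) :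
    k ∈ S ↔ k.val < S.card := by
  constructor
  · intro hk
    have hb : ∀ m ∈ Finset.range (k.val + 1), m < n := fun m hm =>
      lt_of_lt_of_le (Finset.mem_range.1 hm) k.isLt
    have hsub : (Finset.range (k.val + 1)).attachFin hb ⊆ S := by
      intro k' hk'
      have : k'.val < k.val + 1 := Finset.mem_range.1 ((Finset.mem_attachFin hb).1 hk')
      exact hdc (by omega : k' ≤ k) hk
    have := Finset.card_le_card hsub
    rwa [Finset.card_attachFin, Finset.card_range] at this
  · intro hk
    by_contra hkS
    have hb : ∀ m ∈ Finset.range k.val, m < n := fun m hm =>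
      lt_trans (Finset.mem_range.1 hm) k.isLt
    have hsub : S ⊆ (Finset.range k.val).attachFin hb := by
      intro k' hk'
      rw [Finset.mem_attachFin, Finset.mem_range]
      by_contra hlt
      exact hkS (hdc (by omega : k ≤ k') hk')
    have := Finset.card_le_card hsub
    rw [Finset.card_attachFin, Finset.card_range] at this
    omega

def graphOfList (n : ℕ) (P : List ℕ) : SimpleGraph (Fin n) where
  Adj i j := i ≠ j ∧ P.getD (max i.val j.val) 0 ≤ min i.val j.val
  symm := by
    constructor
    intro i j ⟨h1, h2⟩
    exact ⟨h1.symm, by rwa [Nat.max_comm, Nat.min_comm]⟩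
  loopless := ⟨fun i h => h.1 rfl⟩
end core

/-- Graphs on `Fin n` up to isomorphism. -/
def isoSetoid (n : ℕ) : Setoid (SimpleGraph (Fin n)) where
  r G G' := Nonempty (G ≃g G')
  iseqv := ⟨fun G => ⟨SimpleGraph.Iso.refl⟩, fun ⟨e⟩ => ⟨e.symm⟩, fun ⟨e⟩ ⟨f⟩ => ⟨e.trans f⟩⟩

/-- The type of graphical structures (isomorphism classes of graphs) on `n` vertices. -/
def GraphStruct (n : ℕ) : Type := Quotient (isoSetoid n)

noncomputable instance (n : ℕ) : Fintype (GraphStruct n) :=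
  @Quotient.fintype _ _ (isoSetoid n) (Classical.decRel _)

/-- The geometric graph of node locations `x` with connection range `r`. -/
def graphOf {n : ℕ} (r : ℝ) (x : Fin n → ℝ) : SimpleGraph (Fin n) where
  Adj i j := i ≠ j ∧ |x i - x j| ≤ r
  symm := by
    constructor
    intro i j h
    exact ⟨h.1.symm, by rw [abs_sub_comm]; exact h.2⟩
  loopless := by constructor; intro i h; exact h.1 rfl

/-- The structure (isomorphism class) of the geometric graph of `x`. -/
def structOf {n : ℕ} (r : ℝ) (x : Fin n → ℝ) : GraphStruct n :=
  Quotient.mk (isoSetoid n) (graphOf r x)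

lemma structOf_realize {n : ℕ} {r : ℝ} (hr : 0 < r) (x : Fin n → ℝ) :
    ∃ p : DyckWord, p.semilength = n ∧
      Quotient.mk (isoSetoid n) (graphOfList n (decodeSteps p.toList 0)) = structOf r x := by
  classical
  set σ := Tuple.sort x with hσ
  set y : Fin n → ℝ := x ∘ σ with hy
  have hmy : Monotone y := Tuple.monotone_sort x
  set G : ℕ → ℕ := fun j =>
    if h : j < n then (Finset.univ.filter fun k : Fin n => y k + r < y ⟨j, h⟩).card else n
    with hG
  have hGle : ∀ j, G j ≤ j := by
    intro j
    rw [hG]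
    dsimp only
    split
    · next h =>
      have hsub : (Finset.univ.filter fun k : Fin n => y k + r < y ⟨j, h⟩) ⊆
          (Finset.range j).attachFin (fun m hm => lt_trans (Finset.mem_range.1 hm) h) := by
        intro k hk
        rw [Finset.mem_attachFin, Finset.mem_range]
        rw [Finset.mem_filter] at hk
        by_contra hge
        have hle : (⟨j, h⟩ : Fin n) ≤ k := by rw [Fin.le_def]; show j ≤ (k:ℕ); omega
        have := hmy hle
        linarith [hk.2]
      have := Finset.card_le_card hsub
      rwa [Finset.card_attachFin, Finset.card_range] at this
    · next h => omega
  have hGmono : Monotone G := by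
    intro j j' hjj'
    rw [hG]
    dsimp only
    split
    · next h =>
      split
      · next h' =>
        refine Finset.card_le_card (Finset.monotone_filter_right _ ?_)
        intro k _ hk
        have : y ⟨j, h⟩ ≤ y ⟨j', h'⟩ := hmy (by rw [Fin.le_def]; exact hjj')
        exact lt_of_lt_of_le hk this
      · next h' =>
        calc (Finset.univ.filter fun k : Fin n => y k + r < y ⟨j, h⟩).card
            ≤ Finset.univ.card := Finset.card_filter_le _ _
          _ = n := by simp
    · next h =>
      split
      · next h' => omega
      · next h' => exact le_refl n
  have hG0 : G 0 = 0 := Nat.le_zero.1 (hGle 0)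
  have hGn : G n = n := by rw [hG]; simp
  refine ⟨⟨dyckW G n 0, ?_, ?_⟩, ?_, ?_⟩
  · rw [dyckW_count_U, dyckW_count_D G hGmono, Nat.add_zero]
    omega
  · intro i
    have := dyckW_prefix G hGmono n 0 0
      (fun j hj => by have := hGle j; simp only [Nat.zero_add]; omega) i
    simpa using this
  · exact dyckW_count_U G n 0
  · show Quotient.mk _ (graphOfList n (decodeSteps (dyckW G n 0) 0)) = _
    have hdec : decodeSteps (dyckW G n 0) 0 = List.ofFn (fun i : Fin n => G i.val) := by
      rw [dyckW_decode G hGmono]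
      refine congrArg _ (funext fun i => ?_)
      have := hGle i.val
      simp only [Nat.zero_add, hG0]
      omega
    rw [hdec]
    have key : ∀ a b : Fin n, a.val < b.val → (G b.val ≤ a.val ↔ |y a - y b| ≤ r) := by
      intro a b hab
      have hy_ab : y a ≤ y b := hmy (by rw [Fin.le_def]; omega)
      have habs : |y a - y b| = y b - y a := by
        rw [abs_sub_comm, abs_of_nonneg (by linarith)]
      set S := Finset.univ.filter fun k : Fin n => y k + r < y ⟨b.val, b.isLt⟩ with hS
      have hdc : ∀ ⦃k k' : Fin n⦄, k' ≤ k → k ∈ S → k' ∈ S := by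
        intro k k' hkk hk
        rw [hS, Finset.mem_filter] at hk ⊢
        have := hmy hkk
        exact ⟨Finset.mem_univ _, by linarith [hk.2]⟩
      have hGb : G b.val = S.card := by rw [hG]; dsimp only; rw [dif_pos b.isLt]
      have hmem := mem_iff_lt_card S hdc a
      rw [hS, Finset.mem_filter] at hmem
      have hbb : (⟨b.val, b.isLt⟩ : Fin n) = b := rfl
      rw [hbb] at hmem
      rw [hGb, habs]
      constructor
      · intro hle
        have : ¬ (a.val < S.card) := by omega
        have : ¬ (y a + r < y b) := fun hc => this (hmem.1 ⟨Finset.mem_univ _, hc⟩)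
        linarith
      · intro hle
        have : ¬ (y a + r < y b) := by linarith
        have : ¬ (a.val < S.card) := fun hc => this (hmem.2 hc).2
        omega
    have hgy : graphOfList n (List.ofFn (fun i : Fin n => G i.val)) = graphOf r y := by
      ext i j
      show (i ≠ j ∧ _ ≤ _) ↔ (i ≠ j ∧ |y i - y j| ≤ r)
      refine and_congr_right fun hij => ?_
      have hvne : i.val ≠ j.val := fun hc => hij (Fin.val_injective hc)
      have hmaxlt : max i.val j.val < n := max_lt i.isLt j.isLt
      rw [List.getD_eq_getElem _ _ (by simpa using hmaxlt), List.getElem_ofFn]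
      show G (max i.val j.val) ≤ min i.val j.val ↔ _
      rcases Nat.lt_or_ge i.val j.val with h | h
      · rw [show max i.val j.val = j.val from by omega,
          show min i.val j.val = i.val from by omega]
        exact key i j h
      · have h' : j.val < i.val := by omega
        rw [show max i.val j.val = i.val from by omega,
          show min i.val j.val = j.val from by omega]
        rw [abs_sub_comm]
        exact key j i h'
    rw [hgy]
    refine Quotient.sound ⟨?_⟩
    exact { toEquiv := σ,
            map_rel_iff' := by
              intro a b
              show (σ a ≠ σ b ∧ |x (σ a) - x (σ b)| ≤ r) ↔ (a ≠ b ∧ |y a - y b| ≤ r)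
              rw [hy]
              simp [Function.comp, EmbeddingLike.apply_eq_iff_eq] }

lemma achievable_ncard_le (n : ℕ) {r : ℝ} (hr : 0 < r) :
    {s : GraphStruct n | ∃ x : Fin n → ℝ, (∀ i, x i ∈ Set.Icc (0 : ℝ) 1) ∧
        structOf r x = s}.ncard ≤ catalan n := by
  classical
  set Φ : {p : DyckWord // p.semilength = n} → GraphStruct n :=
    fun p => Quotient.mk (isoSetoid n) (graphOfList n (decodeSteps p.1.toList 0)) with hΦ
  have hsub : {s : GraphStruct n | ∃ x : Fin n → ℝ, (∀ i, x i ∈ Set.Icc (0 : ℝ) 1) ∧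
      structOf r x = s} ⊆ Set.range Φ := by
    rintro s ⟨x, hx, rfl⟩
    obtain ⟨p, hp1, hp2⟩ := structOf_realize hr x
    exact ⟨⟨p, hp1⟩, hp2⟩
  calc {s : GraphStruct n | ∃ x : Fin n → ℝ, (∀ i, x i ∈ Set.Icc (0 : ℝ) 1) ∧
        structOf r x = s}.ncard
      ≤ (Set.range Φ).ncard := Set.ncard_le_ncard hsub (Set.toFinite _)
    _ = Nat.card (Set.range Φ) := (Nat.card_coe_set_eq _).symm
    _ ≤ Nat.card {p : DyckWord // p.semilength = n} :=
        Nat.card_le_card_of_surjective (Set.rangeFactorization Φ)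
          Set.rangeFactorization_surjective
    _ = catalan n := by
        rw [Nat.card_eq_fintype_card, DyckWord.card_dyckWord_semilength_eq_catalan]

lemma entropy_le_logb_card {α : Type*} [Fintype α] (p : α → ℝ) (h0 : ∀ a, 0 ≤ p a)
    (hsum : ∑ a, p a = 1) {N : ℕ}
    (hN : (Finset.univ.filter fun a => p a ≠ 0).card ≤ N) (hN1 : 1 ≤ N) :
    -∑ a, p a * Real.logb 2 (p a) ≤ Real.logb 2 N := by
  classical
  set A : Finset α := Finset.univ.filter fun a => p a ≠ 0 with hA
  set M : ℕ := A.card with hM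
  have hMsum : ∑ a ∈ A, p a = 1 := by
    rw [hA, Finset.sum_filter_ne_zero]; exact hsum
  have hM1 : 1 ≤ M := by
    by_contra h
    have : A = ∅ := Finset.card_eq_zero.1 (by omega)
    rw [this] at hMsum; simp at hMsum
  have hMpos : (0:ℝ) < M := by exact_mod_cast hM1
  have hjen := Real.concaveOn_negMulLog.le_map_sum (t := A)
    (w := fun _ => (M:ℝ)⁻¹) (p := p)
    (fun i _ => by positivity)
    (by rw [Finset.sum_const, nsmul_eq_mul]; exact mul_inv_cancel₀ hMpos.ne')
    (fun i _ => Set.mem_Ici.2 (h0 i))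
  simp only [smul_eq_mul] at hjen
  rw [← Finset.mul_sum, ← Finset.mul_sum, hMsum, mul_one] at hjen
  have hneg : Real.negMulLog ((M:ℝ)⁻¹) = (M:ℝ)⁻¹ * Real.log M := by
    rw [Real.negMulLog, Real.log_inv]; ring
  rw [hneg] at hjen
  have hsum_le : ∑ i ∈ A, Real.negMulLog (p i) ≤ Real.log M := by
    have := mul_le_mul_of_nonneg_left hjen hMpos.le
    rw [← mul_assoc, ← mul_assoc, mul_inv_cancel₀ hMpos.ne', one_mul, one_mul] at this
    exact this
  have hfull : ∑ a, Real.negMulLog (p a) = ∑ i ∈ A, Real.negMulLog (p i) := by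
    refine (Finset.sum_subset (Finset.filter_subset _ _) ?_).symm
    intro a _ ha
    have : p a = 0 := by simpa [hA] using ha
    simp [this]
  have hlog2 : (0:ℝ) < Real.log 2 := Real.log_pos (by norm_num)
  have hent : -∑ a, p a * Real.logb 2 (p a) = (∑ a, Real.negMulLog (p a)) / Real.log 2 := by
    have h1 : (∑ a, Real.negMulLog (p a)) / Real.log 2 = ∑ a, -(p a * Real.logb 2 (p a)) := by
      rw [Finset.sum_div]
      exact Finset.sum_congr rfl fun a _ => by rw [Real.logb, Real.negMulLog]; ring
    rw [h1, Finset.sum_neg_distrib]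
  calc -∑ a, p a * Real.logb 2 (p a)
      = (∑ a, Real.negMulLog (p a)) / Real.log 2 := hent
    _ = (∑ i ∈ A, Real.negMulLog (p i)) / Real.log 2 := by rw [hfull]
    _ ≤ Real.log M / Real.log 2 := by gcongr
    _ = Real.logb 2 M := rfl
    _ ≤ Real.logb 2 N := Real.logb_le_logb_of_le (by norm_num) hMpos (by exact_mod_cast hN)

lemma one_le_catalan (n : ℕ) : 1 ≤ catalan n := by
  by_contra h
  have h0 : catalan n = 0 := by omega
  have h1 := succ_mul_catalan_eq_centralBinom n
  rw [h0, Nat.mul_zero] at h1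
  exact absurd h1.symm (Nat.centralBinom_pos n).ne'

/-- for any `n ≥ 1`, any connection range `r > 0`, and any distribution of
the node locations in `[0,1]`, the number of distinct structures of 1D random geometric
graphs on `n` nodes is at most the `n`-th Catalan number, and the structural entropy
satisfies `H(S_{n,r}) ≤ 2n − (3/2)·log₂ n − (1/2)·log₂ π`. -/
theorem structural_entropy_upper_bound (n : ℕ) (hn : 1 ≤ n) (r : ℝ) (hr : 0 < r)
    {Ω : Type*} [MeasurableSpace Ω] (μ : Measure Ω) [IsProbabilityMeasure μ]
    (X : Ω → Fin n → ℝ) (hX : ∀ ω i, X ω i ∈ Set.Icc (0 : ℝ) 1)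
    (hmeas : ∀ s : GraphStruct n, MeasurableSet {ω | structOf r (X ω) = s}) :
    {s : GraphStruct n | ∃ x : Fin n → ℝ, (∀ i, x i ∈ Set.Icc (0 : ℝ) 1) ∧
        structOf r x = s}.ncard ≤ catalan n ∧
    -∑ s : GraphStruct n,
        (μ {ω | structOf r (X ω) = s}).toReal *
          Real.logb 2 (μ {ω | structOf r (X ω) = s}).toReal
      ≤ 2 * n - (3 / 2) * Real.logb 2 n - (1 / 2) * Real.logb 2 Real.pi := by
  classical
  have hpart1 := achievable_ncard_le n hr
  refine ⟨hpart1, ?_⟩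
  have hn0' : (0:ℝ) < n := by exact_mod_cast hn
  set p : GraphStruct n → ℝ := fun s => (μ {ω | structOf r (X ω) = s}).toReal with hp
  have h0 : ∀ s, 0 ≤ p s := fun s => ENNReal.toReal_nonneg
  have hdisj : Pairwise (Function.onFun Disjoint fun s : GraphStruct n =>
      {ω | structOf r (X ω) = s}) := by
    intro s t hst
    refine Set.disjoint_left.2 fun ω hs ht => hst ?_
    exact (hs : structOf r (X ω) = s).symm.trans (ht : structOf r (X ω) = t)
  have hcover : (⋃ s : GraphStruct n, {ω | structOf r (X ω) = s}) = Set.univ := by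
    ext ω
    simp only [Set.mem_iUnion, Set.mem_setOf_eq, Set.mem_univ, iff_true]
    exact ⟨structOf r (X ω), rfl⟩
  have hsum1 : ∑ s : GraphStruct n, μ {ω | structOf r (X ω) = s} = 1 := by
    rw [← tsum_fintype (L := SummationFilter.unconditional _), ← measure_iUnion hdisj (fun s => hmeas s), hcover, measure_univ]
  have hsum : ∑ s, p s = 1 := by
    calc ∑ s, p s = (∑ s : GraphStruct n, μ {ω | structOf r (X ω) = s}).toReal :=
          (ENNReal.toReal_sum (fun s _ => measure_ne_top μ _)).symm
      _ = 1 := by rw [hsum1]; simp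
  have hsupp : (Finset.univ.filter fun s => p s ≠ 0).card ≤ catalan n := by
    have hsub : ((Finset.univ.filter fun s => p s ≠ 0) : Set (GraphStruct n)) ⊆
        {s : GraphStruct n | ∃ x : Fin n → ℝ, (∀ i, x i ∈ Set.Icc (0 : ℝ) 1) ∧
          structOf r x = s} := by
      intro s hs
      simp only [Finset.coe_filter, Set.mem_setOf_eq, Finset.mem_univ, true_and] at hs
      have hμ : μ {ω | structOf r (X ω) = s} ≠ 0 := by
        intro h
        exact hs (by rw [hp]; simp [h])
      obtain ⟨ω, hω⟩ := MeasureTheory.nonempty_of_measure_ne_zero hμ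
      exact ⟨X ω, fun i => hX ω i, hω⟩
    calc (Finset.univ.filter fun s => p s ≠ 0).card
        = ((Finset.univ.filter fun s => p s ≠ 0) : Set (GraphStruct n)).ncard :=
          (Set.ncard_coe_finset _).symm
      _ ≤ _ := Set.ncard_le_ncard hsub (Set.toFinite _)
      _ ≤ catalan n := hpart1
  have hH := entropy_le_logb_card p h0 hsum hsupp (one_le_catalan n)
  have hπ : (0:ℝ) < Real.pi := Real.pi_pos
  have hsπ : (0:ℝ) < Real.sqrt Real.pi := Real.sqrt_pos.2 hπ
  have hsn : (0:ℝ) < Real.sqrt n := Real.sqrt_pos.2 hn0'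
  have hD : (0:ℝ) < Real.sqrt Real.pi * ((n:ℝ) * Real.sqrt n) := by positivity
  have hcatpos : (0:ℝ) < (catalan n : ℝ) := by exact_mod_cast one_le_catalan n
  have hle : (catalan n : ℝ) ≤ 4^n / (Real.sqrt Real.pi * ((n:ℝ) * Real.sqrt n)) :=
    (le_div_iff₀ hD).2 (catalan_real_bound hn)
  have h1 : Real.logb 2 (catalan n) ≤
      Real.logb 2 ((4:ℝ)^n / (Real.sqrt Real.pi * ((n:ℝ) * Real.sqrt n))) :=
    Real.logb_le_logb_of_le one_lt_two hcatpos hle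
  have h2 : Real.logb 2 ((4:ℝ)^n / (Real.sqrt Real.pi * ((n:ℝ) * Real.sqrt n)))
      = 2*(n:ℝ) - (3/2) * Real.logb 2 n - (1/2) * Real.logb 2 Real.pi := by
    rw [Real.logb_div (by positivity) (ne_of_gt hD),
      Real.logb_mul (ne_of_gt hsπ) (by positivity),
      Real.logb_mul (ne_of_gt hn0') (ne_of_gt hsn), Real.logb_pow]
    have l4 : Real.logb 2 (4:ℝ) = 2 := by
      rw [show (4:ℝ) = 2^(2:ℕ) by norm_num, Real.logb_pow,
        Real.logb_self_eq_one (by norm_num)]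
      norm_num
    have lsqrtpi : Real.logb 2 (Real.sqrt Real.pi) = (1/2) * Real.logb 2 Real.pi := by
      rw [Real.logb, Real.logb, Real.log_sqrt hπ.le]; ring
    have lsqrtn : Real.logb 2 (Real.sqrt (n:ℝ)) = (1/2) * Real.logb 2 (n:ℝ) := by
      rw [Real.logb, Real.logb, Real.log_sqrt hn0'.le]; ring
    rw [l4, lsqrtpi, lsqrtn]
    ring
  calc -∑ s : GraphStruct n, p s * Real.logb 2 (p s)
      ≤ Real.logb 2 (catalan n) := hH
    _ ≤ 2*(n:ℝ) - (3/2) * Real.logb 2 n - (1/2) * Real.logb 2 Real.pi := by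
        rw [← h2]; exact h1
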